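/- (Exponential bound on the number of rooted Toom contours, two charges.) Let φ be a non-constant monotone local map, fix A_1(φ), A_2(φ) ∈ 𝒜(φ) with cardinalities M_1, M_2, and let 𝒯''_0 denote the set of equivalence classes of Toom contours with 2 charges rooted at (0,0) satisfying: edges of charge s starting at internal vertices or the root have spatial increment in A_s(φ); edges of charge s starting at a source other than the root have spatial increment in A_{3−s}(φ); and at every source other than the root, the two outgoing edges have distinct spatial endpoints. Let N''_n be the number of such contours with exactly n edges of each charge. Then N''_n ≤ (1/2)(4 M_1 M_2)^n for all n ≥ 1. -/

import Mathlib

abbrev Conf (d : ℕ) := (Fin d → ℤ) → Bool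

def IsLocal {d : ℕ} (φ : Conf d → Bool) : Prop :=
  ∃ Δ : Finset (Fin d → ℤ), ∀ x y : Conf d, (∀ i ∈ Δ, x i = y i) → φ x = φ y

def IsMonotoneMap {d : ℕ} (φ : Conf d → Bool) : Prop :=
  ∀ x y : Conf d, (∀ i, x i ≤ y i) → φ x ≤ φ y

def ind {d : ℕ} (A : Finset (Fin d → ℤ)) : Conf d := fun i => decide (i ∈ A)

/-- `𝒜(φ)`: minimal finite sets `A` with `φ(1_A) = 1`. -/
def minUp {d : ℕ} (φ : Conf d → Bool) : Set (Finset (Fin d → ℤ)) :=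
  {A | φ (ind A) = true ∧ ∀ B ⊆ A, φ (ind B) = true → B = A}

/-- The coercion `ℤ^d → ℝ^d`. -/
def toR {d : ℕ} (i : Fin d → ℤ) : Fin d → ℝ := fun k => (i k : ℝ)
/-- Directed edges of type `s` entering `v`. -/
def inE {V : Type*} {σ : ℕ} (E : Fin σ → Set (V × V)) (s : Fin σ) (v : V) : Set (V × V) :=
  {e ∈ E s | e.2 = v}

/-- Directed edges of type `s` leaving `v`. -/
def outE {V : Type*} {σ : ℕ} (E : Fin σ → Set (V × V)) (s : Fin σ) (v : V) : Set (V × V) :=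
  {e ∈ E s | e.1 = v}

/-- A Toom graph with `σ` charges: every vertex is isolated, a source, a sink,
or an internal vertex of some charge `s`. -/
def IsToomGraph {V : Type*} {σ : ℕ} (E : Fin σ → Set (V × V)) : Prop :=
  ∀ v : V,
    (∀ s, inE E s v = ∅ ∧ outE E s v = ∅) ∨
    (∀ s, inE E s v = ∅ ∧ (outE E s v).ncard = 1) ∨
    (∀ s, (inE E s v).ncard = 1 ∧ outE E s v = ∅) ∨
    (∃ s, (inE E s v).ncard = 1 ∧ (outE E s v).ncard = 1 ∧
      ∀ l, l ≠ s → inE E l v = ∅ ∧ outE E l v = ∅)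

/-- `V_∘`: the set of sources (no incoming edges of any type). -/
def sources {V : Type*} {σ : ℕ} (E : Fin σ → Set (V × V)) : Set V :=
  {v | ∀ s, inE E s v = ∅}

/-- `V_∗`: the set of sinks (no outgoing edges of any type). -/
def sinks {V : Type*} {σ : ℕ} (E : Fin σ → Set (V × V)) : Set V :=
  {v | ∀ s, outE E s v = ∅}

/-- `V_s`: the set of internal vertices of charge `s`. -/
def internals {V : Type*} {σ : ℕ} (E : Fin σ → Set (V × V)) (s : Fin σ) : Set V :=
  {v | (inE E s v).ncard = 1 ∧ (outE E s v).ncard = 1}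

/-- An embedding of a Toom graph into space-time `ℤ^d × ℤ`: time decreases by
exactly `1` along every directed edge, sinks do not overlap with any other
vertex, and internal vertices of the same charge do not overlap. -/
def IsEmbedding {V : Type*} {σ d : ℕ} (E : Fin σ → Set (V × V))
    (ψ : V → (Fin d → ℤ) × ℤ) : Prop :=
  (∀ s, ∀ e ∈ E s, (ψ e.2).2 = (ψ e.1).2 - 1) ∧
  (∀ v ∈ sinks E, ∀ w : V, w ≠ v → ψ w ≠ ψ v) ∧
  (∀ s : Fin σ, ∀ v ∈ internals E s, ∀ w ∈ internals E s, v ≠ w → ψ v ≠ ψ w)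

/-- Undirected adjacency induced by the charged edge sets. -/
def adjE {V : Type*} {σ : ℕ} (E : Fin σ → Set (V × V)) (v w : V) : Prop :=
  ∃ s, (v, w) ∈ E s ∨ (w, v) ∈ E s

/-- The underlying undirected graph is connected. -/
def IsConnectedGraph {V : Type*} {σ : ℕ} (E : Fin σ → Set (V × V)) : Prop :=
  ∀ v w : V, Relation.ReflTransGen (adjE E) v w

/-- A Toom contour: a connected Toom graph with a designated root source `v₀`,
embedded so that the root has the strictly maximal time coordinate. -/
def IsToomContour {V : Type*} {σ d : ℕ} (E : Fin σ → Set (V × V)) (v₀ : V)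
    (ψ : V → (Fin d → ℤ) × ℤ) : Prop :=
  IsToomGraph E ∧ IsConnectedGraph E ∧ v₀ ∈ sources E ∧ IsEmbedding E ψ ∧
  ∀ v : V, ψ v ≠ ψ v₀ → (ψ v).2 < (ψ v₀).2

/-- `E⃗∗_s`: directed edges of charge `s` starting at an internal vertex of
charge `s` or at the root. -/
def Estar {V : Type*} {σ : ℕ} (E : Fin σ → Set (V × V)) (v₀ : V) (s : Fin σ) :
    Set (V × V) :=
  {e ∈ E s | e.1 ∈ internals E s ∨ e.1 = v₀}

/-- `E⃗∘_s`: directed edges of charge `s` starting at a source other than the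
root. -/
def Ecirc {V : Type*} {σ : ℕ} (E : Fin σ → Set (V × V)) (v₀ : V) (s : Fin σ) :
    Set (V × V) :=
  {e ∈ E s | e.1 ∈ sources E ∧ e.1 ≠ v₀}

/-- A space-time point. -/
abbrev Pt (d : ℕ) := (Fin d → ℤ) × ℤ

/-- `N''_n`: the number of equivalence classes of Toom contours with two charges
rooted at `(0,0)` with `n` edges of each charge, in which edges of charge `s`
out of internal vertices or the root have spatial increment in `A s`, edges of
charge `s` out of other sources have spatial increment in `A (s+1)` (the other
charge), and the two edges out of any source other than the root have distinct
spatial endpoints.  Equivalence classes are identified with the invariant data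
(sink images, images of the edge sets `E⃗∗_s` and `E⃗∘_s`). -/
noncomputable def Ncount'' (d n : ℕ) (A : Fin 2 → Finset (Fin d → ℤ)) : ℕ :=
  Set.ncard { data : Set (Pt d) × (Fin 2 → Set (Pt d × Pt d)) × (Fin 2 → Set (Pt d × Pt d)) |
    ∃ (V : Type) (_ : Finite V) (E : Fin 2 → Set (V × V)) (v₀ : V) (ψ : V → Pt d),
      IsToomContour E v₀ ψ ∧ ψ v₀ = (fun _ => 0, 0) ∧
      (∀ s, ∀ e ∈ Estar E v₀ s, (ψ e.2).1 - (ψ e.1).1 ∈ A s) ∧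
      (∀ s, ∀ e ∈ Ecirc E v₀ s, (ψ e.2).1 - (ψ e.1).1 ∈ A (s + 1)) ∧
      (∀ v ∈ sources E, v ≠ v₀ → ∀ w₁ w₂ : V,
        (v, w₁) ∈ E 0 → (v, w₂) ∈ E 1 → (ψ w₁).1 ≠ (ψ w₂).1) ∧
      (∀ s, (E s).ncard = n) ∧
      data.1 = ψ '' sinks E ∧
      data.2.1 = (fun s => (fun e : V × V => (ψ e.1, ψ e.2)) '' Estar E v₀ s) ∧
      data.2.2 = (fun s => (fun e : V × V => (ψ e.1, ψ e.2)) '' Ecirc E v₀ s) }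

namespace Toom12

open Set Function

variable {V : Type} {E : Fin 2 → Set (V × V)}

def Edg (E : Fin 2 → Set (V × V)) : Type := {e : V × V // e ∈ E 0} ⊕ {e : V × V // e ∈ E 1}

instance [Finite V] : Finite (Edg E) := by unfold Edg; exact Finite.instSum

def tS : Edg E → V := Sum.elim (fun e => e.val.1) (fun e => e.val.2)
def tE : Edg E → V := Sum.elim (fun e => e.val.2) (fun e => e.val.1)

lemma srcFull (htg : IsToomGraph E) {v w : V} {s : Fin 2} (h : (v, w) ∈ E s) :
    (∀ l, inE E l v = ∅ ∧ (outE E l v).ncard = 1) ∨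
    ((inE E s v).ncard = 1 ∧ (outE E s v).ncard = 1 ∧
      ∀ l, l ≠ s → inE E l v = ∅ ∧ outE E l v = ∅) := by
  have hmem : (v, w) ∈ outE E s v := ⟨h, rfl⟩
  rcases htg v with h1 | h1 | h1 | ⟨l, hl1, hl2, hl3⟩
  · exact absurd ((h1 s).2 ▸ hmem) (Set.notMem_empty _)
  · exact Or.inl h1
  · exact absurd ((h1 s).2 ▸ hmem) (Set.notMem_empty _)
  · rcases eq_or_ne l s with rfl | hne
    · exact Or.inr ⟨hl1, hl2, hl3⟩
    · exact absurd ((hl3 s (fun hs => hne hs.symm)).2 ▸ hmem) (Set.notMem_empty _)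

lemma sinkFull (htg : IsToomGraph E) {v w : V} {s : Fin 2} (h : (v, w) ∈ E s) :
    (∀ l, (inE E l w).ncard = 1 ∧ outE E l w = ∅) ∨
    ((inE E s w).ncard = 1 ∧ (outE E s w).ncard = 1 ∧
      ∀ l, l ≠ s → inE E l w = ∅ ∧ outE E l w = ∅) := by
  have hmem : (v, w) ∈ inE E s w := ⟨h, rfl⟩
  rcases htg w with h1 | h1 | h1 | ⟨l, hl1, hl2, hl3⟩
  · exact absurd ((h1 s).1 ▸ hmem) (Set.notMem_empty _)
  · exact absurd ((h1 s).1 ▸ hmem) (Set.notMem_empty _)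
  · exact Or.inl h1
  · rcases eq_or_ne l s with rfl | hne
    · exact Or.inr ⟨hl1, hl2, hl3⟩
    · exact absurd ((hl3 s (fun hs => hne hs.symm)).1 ▸ hmem) (Set.notMem_empty _)

lemma exu_start_of {u : V}
    (h : ((outE E 0 u).ncard = 1 ∧ inE E 1 u = ∅) ∨
         (outE E 0 u = ∅ ∧ (inE E 1 u).ncard = 1)) :
    ∃! g : Edg E, tS g = u := by
  rcases h with ⟨h1, h2⟩ | ⟨h1, h2⟩
  · obtain ⟨a, ha⟩ := Set.ncard_eq_one.mp h1
    have haE : a ∈ outE E 0 u := by rw [ha]; rfl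
    refine ⟨Sum.inl ⟨a, haE.1⟩, haE.2, ?_⟩
    rintro (⟨f, hf⟩ | ⟨f, hf⟩) hg
    · have hmem : f ∈ outE E 0 u := ⟨hf, hg⟩
      rw [ha, Set.mem_singleton_iff] at hmem
      subst hmem; rfl
    · have hmem : f ∈ inE E 1 u := ⟨hf, hg⟩
      rw [h2] at hmem; exact absurd hmem (Set.notMem_empty _)
  · obtain ⟨a, ha⟩ := Set.ncard_eq_one.mp h2
    have haE : a ∈ inE E 1 u := by rw [ha]; rfl
    refine ⟨Sum.inr ⟨a, haE.1⟩, haE.2, ?_⟩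
    rintro (⟨f, hf⟩ | ⟨f, hf⟩) hg
    · have hmem : f ∈ outE E 0 u := ⟨hf, hg⟩
      rw [h1] at hmem; exact absurd hmem (Set.notMem_empty _)
    · have hmem : f ∈ inE E 1 u := ⟨hf, hg⟩
      rw [ha, Set.mem_singleton_iff] at hmem
      subst hmem; rfl

lemma exu_end_of {u : V}
    (h : (((inE E 0 u).ncard = 1 ∧ outE E 1 u = ∅)) ∨
         (inE E 0 u = ∅ ∧ (outE E 1 u).ncard = 1)) :
    ∃! g : Edg E, tE g = u := by
  rcases h with ⟨h1, h2⟩ | ⟨h1, h2⟩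
  · obtain ⟨a, ha⟩ := Set.ncard_eq_one.mp h1
    have haE : a ∈ inE E 0 u := by rw [ha]; rfl
    refine ⟨Sum.inl ⟨a, haE.1⟩, haE.2, ?_⟩
    rintro (⟨f, hf⟩ | ⟨f, hf⟩) hg
    · have hmem : f ∈ inE E 0 u := ⟨hf, hg⟩
      rw [ha, Set.mem_singleton_iff] at hmem
      subst hmem; rfl
    · have hmem : f ∈ outE E 1 u := ⟨hf, hg⟩
      rw [h2] at hmem; exact absurd hmem (Set.notMem_empty _)
  · obtain ⟨a, ha⟩ := Set.ncard_eq_one.mp h2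
    have haE : a ∈ outE E 1 u := by rw [ha]; rfl
    refine ⟨Sum.inr ⟨a, haE.1⟩, haE.2, ?_⟩
    rintro (⟨f, hf⟩ | ⟨f, hf⟩) hg
    · have hmem : f ∈ inE E 0 u := ⟨hf, hg⟩
      rw [h1] at hmem; exact absurd hmem (Set.notMem_empty _)
    · have hmem : f ∈ outE E 1 u := ⟨hf, hg⟩
      rw [ha, Set.mem_singleton_iff] at hmem
      subst hmem; rfl

/-- Incidence of an edge to a vertex. -/
def incid (g : Edg E) (u : V) : Prop := tS g = u ∨ tE g = u

lemma exu_start (htg : IsToomGraph E) {u : V} {g : Edg E} (hg : incid g u) :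
    ∃! g' : Edg E, tS g' = u := by
  apply exu_start_of (E := E)
  rcases g with ⟨e, he⟩ | ⟨e, he⟩ <;> rcases hg with hg | hg
  · -- u = e.1, has out-edge of charge 0
    rcases srcFull htg (v := e.1) (w := e.2) (by simpa using he) with h | h
    · subst hg; exact Or.inl ⟨(h 0).2, (h 1).1⟩
    · subst hg; exact Or.inl ⟨h.2.1, (h.2.2 1 (by decide)).1⟩
  · -- u = e.2, has in-edge of charge 0
    rcases sinkFull htg (v := e.1) (w := e.2) (by simpa using he) with h | h
    · subst hg; exact Or.inr ⟨(h 0).2, (h 1).1⟩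
    · subst hg; exact Or.inl ⟨h.2.1, (h.2.2 1 (by decide)).1⟩
  · -- g = inr, tS = e.2: u has in-edge of charge 1
    rcases sinkFull htg (v := e.1) (w := e.2) (by simpa using he) with h | h
    · subst hg; exact Or.inr ⟨(h 0).2, (h 1).1⟩
    · subst hg; exact Or.inr ⟨(h.2.2 0 (by decide)).2, h.1⟩
  · -- g = inr, tE = e.1: u has out-edge of charge 1
    rcases srcFull htg (v := e.1) (w := e.2) (by simpa using he) with h | h
    · subst hg; exact Or.inl ⟨(h 0).2, (h 1).1⟩
    · subst hg; exact Or.inr ⟨(h.2.2 0 (by decide)).2, h.1⟩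

lemma exu_end (htg : IsToomGraph E) {u : V} {g : Edg E} (hg : incid g u) :
    ∃! g' : Edg E, tE g' = u := by
  apply exu_end_of (E := E)
  rcases g with ⟨e, he⟩ | ⟨e, he⟩ <;> rcases hg with hg | hg
  · -- u = e.1 has out0
    rcases srcFull htg (v := e.1) (w := e.2) (by simpa using he) with h | h
    · subst hg; exact Or.inr ⟨(h 0).1, (h 1).2⟩
    · subst hg; exact Or.inl ⟨h.1, (h.2.2 1 (by decide)).2⟩
  · -- u = e.2 has in0
    rcases sinkFull htg (v := e.1) (w := e.2) (by simpa using he) with h | h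
    · subst hg; exact Or.inl ⟨(h 0).1, (h 1).2⟩
    · subst hg; exact Or.inl ⟨h.1, (h.2.2 1 (by decide)).2⟩
  · -- inr, u = e.2 has in1
    rcases sinkFull htg (v := e.1) (w := e.2) (by simpa using he) with h | h
    · subst hg; exact Or.inl ⟨(h 0).1, (h 1).2⟩
    · subst hg; exact Or.inr ⟨(h.2.2 0 (by decide)).1, h.2.1⟩
  · -- inr, u = e.1 has out1
    rcases srcFull htg (v := e.1) (w := e.2) (by simpa using he) with h | h
    · subst hg; exact Or.inr ⟨(h 0).1, (h 1).2⟩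
    · subst hg; exact Or.inr ⟨(h.2.2 0 (by decide)).1, h.2.1⟩

end Toom12
namespace Toom12
variable {V : Type} {E : Fin 2 → Set (V × V)}

noncomputable def nxt (htg : IsToomGraph E) : Edg E → Edg E :=
  fun g => (exu_start htg (g := g) (Or.inr rfl : incid g (tE g))).exists.choose

lemma tS_nxt (htg : IsToomGraph E) (g : Edg E) : tS (nxt htg g) = tE g :=
  (exu_start htg (g := g) (Or.inr rfl : incid g (tE g))).exists.choose_spec

lemma nxt_eq (htg : IsToomGraph E) {g g' : Edg E} (h : tS g' = tE g) : nxt htg g = g' :=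
  (exu_start htg (g := g) (Or.inr rfl : incid g (tE g))).unique (tS_nxt htg g) h

lemma nxt_inj (htg : IsToomGraph E) : Function.Injective (nxt htg) := by
  intro g1 g2 h
  have h1 : tE g1 = tS (nxt htg g1) := (tS_nxt htg g1).symm
  have h2 : tE g2 = tS (nxt htg g1) := by rw [h]; exact (tS_nxt htg g2).symm
  exact (exu_end htg (g := nxt htg g1) (Or.inl rfl : incid _ (tS (nxt htg g1)))).unique h1 h2

/-- Reachability along the successor map. -/
def reach (htg : IsToomGraph E) (g h : Edg E) : Prop := ∃ k, (nxt htg)^[k] g = h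

lemma reach_refl (htg : IsToomGraph E) (g : Edg E) : reach htg g g := ⟨0, rfl⟩

lemma reach_trans (htg : IsToomGraph E) {g h i : Edg E}
    (h1 : reach htg g h) (h2 : reach htg h i) : reach htg g i := by
  obtain ⟨k, hk⟩ := h1; obtain ⟨l, hl⟩ := h2
  exact ⟨l + k, by rw [Function.iterate_add_apply, hk, hl]⟩

variable [Finite V]

lemma exists_period (htg : IsToomGraph E) (g : Edg E) :
    ∃ N, 0 < N ∧ (nxt htg)^[N] g = g := by
  obtain ⟨i, j, hne, hij⟩ :=
    Finite.exists_ne_map_eq_of_infinite (fun k : ℕ => (nxt htg)^[k] g)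
  rcases hne.lt_or_gt with hlt | hlt
  · refine ⟨j - i, by omega, ?_⟩
    have := Function.Injective.iterate (nxt_inj htg) i
    apply this
    rw [← Function.iterate_add_apply]
    have : i + (j - i) = j := by omega
    rw [this]; exact hij.symm
  · refine ⟨i - j, by omega, ?_⟩
    have := Function.Injective.iterate (nxt_inj htg) j
    apply this
    rw [← Function.iterate_add_apply]
    have : j + (i - j) = i := by omega
    rw [this]; exact hij

lemma reach_symm (htg : IsToomGraph E) {g h : Edg E} (h1 : reach htg g h) :
    reach htg h g := by
  obtain ⟨k, hk⟩ := h1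
  obtain ⟨N, hN0, hN⟩ := exists_period htg g
  refine ⟨k * N - k, ?_⟩
  rw [← hk, ← Function.iterate_add_apply]
  have hkk : k * N - k + k = k * N := by
    have : k ≤ k * N := Nat.le_mul_of_pos_right k hN0
    omega
  rw [hkk, mul_comm, Function.iterate_mul]
  exact Function.iterate_fixed hN k

lemma reach_of_incid (htg : IsToomGraph E) {g h : Edg E} {u : V}
    (hg : incid g u) (hh : incid h u) : reach htg g h := by
  rcases hg with hg | hg <;> rcases hh with hh | hh
  · rw [(exu_start htg (g := g) (Or.inl hg)).unique hg hh]; exact reach_refl htg h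
  · apply reach_symm htg
    exact ⟨1, nxt_eq htg (by rw [hg, hh])⟩
  · exact ⟨1, nxt_eq htg (by rw [hg, hh])⟩
  · rw [(exu_end htg (g := g) (Or.inr hg)).unique hg hh]; exact reach_refl htg h

lemma reach_all (htg : IsToomGraph E) (hconn : IsConnectedGraph E) (g h : Edg E) :
    reach htg g h := by
  have key : ∀ w, Relation.ReflTransGen (adjE E) (tS g) w →
      ∀ h : Edg E, incid h w → reach htg g h := by
    intro w hw
    induction hw with
    | refl => intro h hh; exact reach_of_incid htg (Or.inl rfl) hh
    | @tail b c hab hbc ih =>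
      intro h hh
      obtain ⟨s, hs⟩ := hbc
      fin_cases s
      · rcases hs with hs | hs
        · have h1 : reach htg g (Sum.inl ⟨(b, c), hs⟩ : Edg E) := ih _ (Or.inl rfl)
          exact reach_trans htg h1 (reach_of_incid htg (Or.inr rfl) hh)
        · have h1 : reach htg g (Sum.inl ⟨(c, b), hs⟩ : Edg E) := ih _ (Or.inr rfl)
          exact reach_trans htg h1 (reach_of_incid htg (Or.inl rfl) hh)
      · rcases hs with hs | hs
        · have h1 : reach htg g (Sum.inr ⟨(b, c), hs⟩ : Edg E) := ih _ (Or.inr rfl)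
          exact reach_trans htg h1 (reach_of_incid htg (Or.inl rfl) hh)
        · have h1 : reach htg g (Sum.inr ⟨(c, b), hs⟩ : Edg E) := ih _ (Or.inl rfl)
          exact reach_trans htg h1 (reach_of_incid htg (Or.inr rfl) hh)
  exact key (tS h) (hconn _ _) h (Or.inl rfl)

end Toom12
namespace Toom12
variable {V : Type} {E : Fin 2 → Set (V × V)}

lemma no_isolated (hconn : IsConnectedGraph E) {x y : V} (hxy : (x, y) ∈ E 0) (v : V)
    (h : ∀ s, inE E s v = ∅ ∧ outE E s v = ∅) : False := by
  rcases (hconn x v).cases_tail with heq | ⟨c, _, hadj⟩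
  · subst heq
    have hm : (v, y) ∈ outE E 0 v := ⟨hxy, rfl⟩
    rw [(h 0).2] at hm; exact absurd hm (Set.notMem_empty _)
  · obtain ⟨s, hs | hs⟩ := hadj
    · have hm : (c, v) ∈ inE E s v := ⟨hs, rfl⟩
      rw [(h s).1] at hm; exact absurd hm (Set.notMem_empty _)
    · have hm : (v, c) ∈ outE E s v := ⟨hs, rfl⟩
      rw [(h s).2] at hm; exact absurd hm (Set.notMem_empty _)

lemma rootFull (htg : IsToomGraph E) (hconn : IsConnectedGraph E) {v₀ : V}
    (hsrc : v₀ ∈ sources E) {x y : V} (hxy : (x, y) ∈ E 0) :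
    ∀ s, inE E s v₀ = ∅ ∧ (outE E s v₀).ncard = 1 := by
  rcases htg v₀ with h1 | h1 | h1 | ⟨l, hl1, hl2, hl3⟩
  · exact (no_isolated hconn hxy v₀ h1).elim
  · exact h1
  · have := (h1 0).1; rw [hsrc 0] at this; simp at this
  · have := hl1; rw [hsrc l] at this; simp at this

lemma root_spec (htg : IsToomGraph E) (hconn : IsConnectedGraph E) {v₀ : V}
    (hsrc : v₀ ∈ sources E) {x y : V} (hxy : (x, y) ∈ E 0) :
    ∃ g : Edg E, g.isLeft ∧ tS g = v₀ ∧ ∀ g', tS g' = v₀ → g' = g := by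
  have hfull := rootFull htg hconn hsrc hxy
  have hexu : ∃! g : Edg E, tS g = v₀ :=
    exu_start_of (Or.inl ⟨(hfull 0).2, (hfull 1).1⟩)
  obtain ⟨a, ha⟩ := Set.ncard_eq_one.mp (hfull 0).2
  have haE : a ∈ outE E 0 v₀ := by rw [ha]; rfl
  refine ⟨Sum.inl ⟨a, haE.1⟩, rfl, haE.2, fun g' hg' => hexu.unique hg' haE.2⟩

variable [Finite V]

lemma card_Edg {n : ℕ} (hcard : ∀ s, (E s).ncard = n) : Nat.card (Edg E) = 2 * n := by
  have : Nat.card (Edg E) = Nat.card {e : V × V // e ∈ E 0} + Nat.card {e : V × V // e ∈ E 1} :=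
    Nat.card_sum
  rw [this]
  have h0 : Nat.card {e : V × V // e ∈ E 0} = (E 0).ncard := Nat.card_coe_set_eq _
  have h1 : Nat.card {e : V × V // e ∈ E 1} = (E 1).ncard := Nat.card_coe_set_eq _
  rw [h0, h1, hcard 0, hcard 1]; ring

lemma walk_facts (htg : IsToomGraph E) (hconn : IsConnectedGraph E) {n : ℕ}
    (hcard : ∀ s, (E s).ncard = n) (e₀ : Edg E) :
    (nxt htg)^[2 * n] e₀ = e₀ ∧
    (∀ i < 2 * n, ∀ j < 2 * n, (nxt htg)^[i] e₀ = (nxt htg)^[j] e₀ → i = j) ∧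
    (∀ g : Edg E, ∃ k < 2 * n, (nxt htg)^[k] e₀ = g) := by
  have hper := exists_period htg e₀
  classical
  obtain ⟨N, hN0, hNfix, hmin⟩ : ∃ N, 0 < N ∧ (nxt htg)^[N] e₀ = e₀ ∧
      ∀ m, 0 < m → (nxt htg)^[m] e₀ = e₀ → N ≤ m :=
    ⟨Nat.find hper, (Nat.find_spec hper).1, (Nat.find_spec hper).2,
      fun m hm1 hm2 => Nat.find_le ⟨hm1, hm2⟩⟩
  have hinj : ∀ i < N, ∀ j < N, (nxt htg)^[i] e₀ = (nxt htg)^[j] e₀ → i = j := by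
    intro i hi j hj hij
    by_contra hne
    rcases Nat.lt_or_ge i j with hlt | hge
    · have : (nxt htg)^[j - i] e₀ = e₀ := by
        apply Function.Injective.iterate (nxt_inj htg) i
        rw [← Function.iterate_add_apply]
        have : i + (j - i) = j := by omega
        rw [this]; exact hij.symm
      exact absurd (hmin (j - i) (by omega) this) (by omega)
    · have hlt : j < i := by omega
      have : (nxt htg)^[i - j] e₀ = e₀ := by
        apply Function.Injective.iterate (nxt_inj htg) j
        rw [← Function.iterate_add_apply]
        have : j + (i - j) = i := by omega
        rw [this]; exact hij
      exact absurd (hmin (i - j) (by omega) this) (by omega)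
  have hcov : ∀ g : Edg E, ∃ k < N, (nxt htg)^[k] e₀ = g := by
    intro g
    obtain ⟨k, hk⟩ := reach_all htg hconn e₀ g
    have hkk : (nxt htg)^[k] e₀ = (nxt htg)^[k % N] e₀ := by
      conv_lhs => rw [← Nat.mod_add_div k N]
      rw [Function.iterate_add_apply, Function.iterate_mul,
        Function.iterate_fixed hNfix]
    exact ⟨k % N, Nat.mod_lt _ hN0, by rw [← hkk, hk]⟩
  have hbij : Function.Bijective (fun k : Fin N => (nxt htg)^[k.val] e₀) := by
    constructor
    · intro i j hij
      exact Fin.ext (hinj i.val i.isLt j.val j.isLt hij)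
    · intro g
      obtain ⟨k, hk, hkg⟩ := hcov g
      exact ⟨⟨k, hk⟩, hkg⟩
  have hNcard : N = 2 * n := by
    have := Nat.card_eq_of_bijective _ hbij
    rw [Nat.card_eq_fintype_card, Fintype.card_fin, card_Edg hcard] at this
    exact this
  rw [hNcard] at hNfix hinj hcov
  exact ⟨hNfix, hinj, hcov⟩

end Toom12
namespace Toom12
variable {V : Type} {E : Fin 2 → Set (V × V)} {v₀ : V} {n d : ℕ}

/-- Charge bit of the `k`-th step of the walk. -/
noncomputable def bbW (htg : IsToomGraph E) (e₀ : Edg E) (k : ℕ) : Bool := ((nxt htg)^[k] e₀).isRight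

/-- Spatial increment of a (graph-)edge. -/
def incW (ψ : V → Pt d) : Edg E → (Fin d → ℤ) :=
  Sum.elim (fun e => (ψ e.val.2).1 - (ψ e.val.1).1) (fun e => (ψ e.val.2).1 - (ψ e.val.1).1)

/-- Spatial increment of the `k`-th edge of the walk. -/
noncomputable def ddW (ψ : V → Pt d) (htg : IsToomGraph E) (e₀ : Edg E) (k : ℕ) : Fin d → ℤ :=
  incW ψ ((nxt htg)^[k] e₀)

/-- The class (`true` = increment lies in `A 0`) of a step, read off the charges. -/
def clsB (b : ℕ → Bool) (m k : ℕ) : Bool :=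
  if b k then (!(b (k + 1)) && decide (k + 1 ≠ m)) else (decide (k = 0) || !(b (k - 1)))

lemma tS_seq_succ (htg : IsToomGraph E) (e₀ : Edg E) (k : ℕ) :
    tS ((nxt htg)^[k + 1] e₀) = tE ((nxt htg)^[k] e₀) := by
  rw [Function.iterate_succ_apply']; exact tS_nxt htg _

lemma estar_or_ecirc (htg : IsToomGraph E) {s : Fin 2} {e : V × V} (he : e ∈ E s) :
    e ∈ Estar E v₀ s ∨ e ∈ Ecirc E v₀ s := by
  rcases srcFull htg (v := e.1) (w := e.2) (by simpa using he) with h | h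
  · by_cases hv : e.1 = v₀
    · exact Or.inl ⟨he, Or.inr hv⟩
    · exact Or.inr ⟨he, fun s => (h s).1, hv⟩
  · exact Or.inl ⟨he, Or.inl ⟨h.1, h.2.1⟩⟩

lemma not_estar_ecirc {s : Fin 2} {e : V × V}
    (h1 : e ∈ Estar E v₀ s) (h2 : e ∈ Ecirc E v₀ s) : False := by
  obtain ⟨_, hint | hv⟩ := h1
  · have hin : (inE E s e.1).ncard = 1 := hint.1
    rw [h2.2.1 s] at hin
    simp at hin
  · exact h2.2.2 hv

lemma char0 (htg : IsToomGraph E) {e₀ : Edg E}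
    (he₀S : tS e₀ = v₀) (he₀U : ∀ g', tS g' = v₀ → g' = e₀)
    (hinj : ∀ i < 2 * n, ∀ j < 2 * n, (nxt htg)^[i] e₀ = (nxt htg)^[j] e₀ → i = j)
    {k : ℕ} (hk : k < 2 * n) {e : {e : V × V // e ∈ E 0}}
    (hke : (nxt htg)^[k] e₀ = Sum.inl e) :
    e.val ∈ Ecirc E v₀ 0 ↔ (1 ≤ k ∧ bbW htg e₀ (k - 1) = true) := by
  constructor
  · rintro ⟨heE, hes, hne⟩
    have hk1 : 1 ≤ k := by
      rcases Nat.eq_zero_or_pos k with rfl | h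
      · simp only [Function.iterate_zero_apply] at hke
        rw [hke] at he₀S
        exact absurd he₀S hne
      · exact h
    refine ⟨hk1, ?_⟩
    by_contra hb
    rw [Bool.not_eq_true] at hb
    unfold bbW at hb
    cases hfk : (nxt htg)^[k - 1] e₀ with
    | inr f => rw [hfk] at hb; simp at hb
    | inl f =>
      have hstep : tS ((nxt htg)^[k] e₀) = tE ((nxt htg)^[k - 1] e₀) := by
        have h' : k - 1 + 1 = k := by omega
        rw [← h']; exact tS_seq_succ htg e₀ (k - 1)
      rw [hke, hfk] at hstep
      have hmem : f.val ∈ inE E 0 e.val.1 := ⟨f.2, (show e.val.1 = f.val.2 from hstep).symm⟩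
      rw [hes 0] at hmem
      exact absurd hmem (Set.notMem_empty _)
  · rintro ⟨hk1, hb⟩
    unfold bbW at hb
    cases hfk : (nxt htg)^[k - 1] e₀ with
    | inl f => rw [hfk] at hb; simp at hb
    | inr f =>
      have hstep : tS ((nxt htg)^[k] e₀) = tE ((nxt htg)^[k - 1] e₀) := by
        have h' : k - 1 + 1 = k := by omega
        rw [← h']; exact tS_seq_succ htg e₀ (k - 1)
      rw [hke, hfk] at hstep
      have hout : f.val ∈ outE E 1 e.val.1 := ⟨f.2, (show e.val.1 = f.val.1 from hstep).symm⟩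
      rcases srcFull htg (s := 0) (v := e.val.1) (w := e.val.2) (by simpa using e.2) with h | h
      · have hne : e.val.1 ≠ v₀ := by
          intro hv
          have heq : (Sum.inl e : Edg E) = e₀ := he₀U _ hv
          rw [heq] at hke
          have := hinj k hk 0 (by omega) (by rw [hke]; rfl)
          omega
        exact ⟨e.2, fun s => (h s).1, hne⟩
      · rw [(h.2.2 1 (by decide)).2] at hout
        exact absurd hout (Set.notMem_empty _)

lemma char1 (htg : IsToomGraph E) {e₀ : Edg E}
    (he₀S : tS e₀ = v₀) (he₀U : ∀ g', tS g' = v₀ → g' = e₀)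
    (hinj : ∀ i < 2 * n, ∀ j < 2 * n, (nxt htg)^[i] e₀ = (nxt htg)^[j] e₀ → i = j)
    (hper : (nxt htg)^[2 * n] e₀ = e₀)
    {k : ℕ} (hk : k < 2 * n) {e : {e : V × V // e ∈ E 1}}
    (hke : (nxt htg)^[k] e₀ = Sum.inr e) :
    e.val ∈ Ecirc E v₀ 1 ↔ (k + 1 ≠ 2 * n ∧ bbW htg e₀ (k + 1) = false) := by
  have hstep : tS ((nxt htg)^[k + 1] e₀) = tE ((nxt htg)^[k] e₀) := tS_seq_succ htg e₀ k
  rw [hke] at hstep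
  constructor
  · rintro ⟨heE, hes, hne⟩
    have hne2n : k + 1 ≠ 2 * n := by
      intro h2
      rw [h2, hper] at hstep
      exact hne ((show v₀ = e.val.1 from he₀S ▸ hstep)).symm
    refine ⟨hne2n, ?_⟩
    unfold bbW
    cases hfk : (nxt htg)^[k + 1] e₀ with
    | inl f => rfl
    | inr f =>
      rw [hfk] at hstep
      have hmem : f.val ∈ inE E 1 e.val.1 := ⟨f.2, (show f.val.2 = e.val.1 from hstep)⟩
      rw [hes 1] at hmem
      exact absurd hmem (Set.notMem_empty _)
  · rintro ⟨hne2n, hb⟩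
    unfold bbW at hb
    cases hfk : (nxt htg)^[k + 1] e₀ with
    | inr f => rw [hfk] at hb; simp at hb
    | inl f =>
      rw [hfk] at hstep
      have hout : f.val ∈ outE E 0 e.val.1 := ⟨f.2, (show f.val.1 = e.val.1 from hstep)⟩
      rcases srcFull htg (s := 1) (v := e.val.1) (w := e.val.2) (by simpa using e.2) with h | h
      · have hne : e.val.1 ≠ v₀ := by
          intro hv
          have h1 : tS (Sum.inl f : Edg E) = v₀ := (show f.val.1 = e.val.1 from hstep).trans hv
          have hfe := he₀U _ h1
          rw [hfe] at hfk
          have := hinj (k + 1) (by omega) 0 (by omega) (by rw [hfk]; rfl)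
          omega
        exact ⟨e.2, fun s => (h s).1, hne⟩
      · rw [(h.2.2 0 (by decide)).2] at hout
        exact absurd hout (Set.notMem_empty _)

lemma sink_exists_step (htg : IsToomGraph E) (hconn : IsConnectedGraph E)
    {x y : V} (hxy : (x, y) ∈ E 0) {e₀ : Edg E}
    (hcov : ∀ g : Edg E, ∃ k < 2 * n, (nxt htg)^[k] e₀ = g)
    {u : V} (hu : u ∈ sinks E) :
    ∃ k, k < 2 * n ∧ bbW htg e₀ k = false ∧ bbW htg e₀ (k + 1) = true ∧
      tE ((nxt htg)^[k] e₀) = u := by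
  have hcls : ∀ l, (inE E l u).ncard = 1 ∧ outE E l u = ∅ := by
    rcases htg u with h | h | h | ⟨l, hl1, hl2, hl3⟩
    · exact (no_isolated hconn hxy u h).elim
    · have h2 := (h 0).2; rw [hu 0] at h2; simp at h2
    · exact h
    · have h2 := hl2; rw [hu l] at h2; simp at h2
  obtain ⟨a, ha⟩ := Set.ncard_eq_one.mp (hcls 0).1
  have haE : a ∈ inE E 0 u := by rw [ha]; rfl
  obtain ⟨k, hk, hke⟩ := hcov (Sum.inl ⟨a, haE.1⟩)
  refine ⟨k, hk, by unfold bbW; rw [hke]; rfl, ?_, by rw [hke]; exact haE.2⟩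
  unfold bbW
  cases hfk : (nxt htg)^[k + 1] e₀ with
  | inr f => rfl
  | inl f =>
    have hstep := tS_seq_succ htg e₀ k
    rw [hke, hfk] at hstep
    have hmem : f.val ∈ outE E 0 u := ⟨f.2, (show f.val.1 = a.2 from hstep).trans haE.2⟩
    rw [hu 0] at hmem
    exact absurd hmem (Set.notMem_empty _)

lemma sink_of_step (htg : IsToomGraph E) (hconn : IsConnectedGraph E)
    {x y : V} (hxy : (x, y) ∈ E 0) {e₀ : Edg E} {k : ℕ}
    (hbk : bbW htg e₀ k = false) (hbk1 : bbW htg e₀ (k + 1) = true) :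
    tE ((nxt htg)^[k] e₀) ∈ sinks E := by
  unfold bbW at hbk hbk1
  cases hek : (nxt htg)^[k] e₀ with
  | inr e => rw [hek] at hbk; simp at hbk
  | inl e =>
    cases hfk : (nxt htg)^[k + 1] e₀ with
    | inl f => rw [hfk] at hbk1; simp at hbk1
    | inr f =>
      have hstep := tS_seq_succ htg e₀ k
      rw [hek, hfk] at hstep
      have hin0 : e.val ∈ inE E 0 e.val.2 := ⟨e.2, rfl⟩
      have hin1 : f.val ∈ inE E 1 e.val.2 := ⟨f.2, (show f.val.2 = e.val.2 from hstep)⟩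
      have hsnk : ∀ s, outE E s e.val.2 = ∅ := by
        rcases htg e.val.2 with h | h | h | ⟨l, hl1, hl2, hl3⟩
        · rw [(h 0).1] at hin0; exact absurd hin0 (Set.notMem_empty _)
        · rw [(h 0).1] at hin0; exact absurd hin0 (Set.notMem_empty _)
        · exact fun s => (h s).2
        · fin_cases l
          · rw [(hl3 1 (by decide)).1] at hin1; exact absurd hin1 (Set.notMem_empty _)
          · rw [(hl3 0 (by decide)).1] at hin0; exact absurd hin0 (Set.notMem_empty _)
      exact hsnk

lemma pw_step (htg : IsToomGraph E) (e₀ : Edg E) {ψ : V → Pt d}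
    (hemb1 : ∀ s, ∀ e ∈ E s, (ψ e.2).2 = (ψ e.1).2 - 1) (k : ℕ) :
    ψ (tS ((nxt htg)^[k + 1] e₀)) =
      (if bbW htg e₀ k
        then ((ψ (tS ((nxt htg)^[k] e₀))).1 - ddW ψ htg e₀ k,
              (ψ (tS ((nxt htg)^[k] e₀))).2 + 1)
        else ((ψ (tS ((nxt htg)^[k] e₀))).1 + ddW ψ htg e₀ k,
              (ψ (tS ((nxt htg)^[k] e₀))).2 - 1)) := by
  rw [tS_seq_succ htg e₀ k]
  unfold bbW ddW incW
  cases hek : (nxt htg)^[k] e₀ with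
  | inl e =>
    have ht := hemb1 0 e.val e.2
    simp only [tS, tE, Sum.elim_inl, Sum.isRight_inl, if_neg Bool.false_ne_true]
    refine Prod.ext ?_ ?_
    · show (ψ e.val.2).1 = (ψ e.val.1).1 + ((ψ e.val.2).1 - (ψ e.val.1).1)
      ring
    · exact ht
  | inr e =>
    have ht := hemb1 1 e.val e.2
    simp only [tS, tE, Sum.elim_inr, Sum.isRight_inr, if_pos rfl]
    refine Prod.ext ?_ ?_
    · show (ψ e.val.1).1 = (ψ e.val.2).1 - ((ψ e.val.2).1 - (ψ e.val.1).1)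
      ring
    · show (ψ e.val.1).2 = (ψ e.val.2).2 + 1
      omega

lemma dd_mem {A : Fin 2 → Finset (Fin d → ℤ)} {ψ : V → Pt d}
    (htg : IsToomGraph E) {e₀ : Edg E}
    (he₀S : tS e₀ = v₀) (he₀U : ∀ g', tS g' = v₀ → g' = e₀)
    (hinj : ∀ i < 2 * n, ∀ j < 2 * n, (nxt htg)^[i] e₀ = (nxt htg)^[j] e₀ → i = j)
    (hper : (nxt htg)^[2 * n] e₀ = e₀)
    (hstar : ∀ s, ∀ e ∈ Estar E v₀ s, (ψ e.2).1 - (ψ e.1).1 ∈ A s)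
    (hcirc : ∀ s, ∀ e ∈ Ecirc E v₀ s, (ψ e.2).1 - (ψ e.1).1 ∈ A (s + 1))
    {k : ℕ} (hk : k < 2 * n) :
    (clsB (bbW htg e₀) (2 * n) k = true → ddW ψ htg e₀ k ∈ A 0) ∧
    (clsB (bbW htg e₀) (2 * n) k = false → ddW ψ htg e₀ k ∈ A 1) := by
  cases hek : (nxt htg)^[k] e₀ with
  | inl e =>
    have hb : bbW htg e₀ k = false := by unfold bbW; rw [hek]; rfl
    have hch := char0 htg he₀S he₀U hinj hk hek
    have hdd : ddW ψ htg e₀ k = (ψ e.val.2).1 - (ψ e.val.1).1 := by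
      unfold ddW incW; rw [hek]; rfl
    unfold clsB
    rw [hb]
    simp only [Bool.false_eq_true, if_false]
    constructor
    · intro hcls
      simp only [Bool.or_eq_true, decide_eq_true_eq, Bool.not_eq_true'] at hcls
      have hnc : e.val ∉ Ecirc E v₀ 0 := by
        rw [hch]
        rintro ⟨h1, h2⟩
        rcases hcls with h | h
        · omega
        · rw [h] at h2; exact absurd h2 (by simp)
      rcases estar_or_ecirc htg e.2 with hst | hci
      · rw [hdd]; exact hstar 0 e.val hst
      · exact absurd hci hnc
    · intro hcls
      simp only [Bool.or_eq_false_iff, decide_eq_false_iff_not, Bool.not_eq_false'] at hcls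
      have hc : e.val ∈ Ecirc E v₀ 0 := hch.mpr ⟨by omega, hcls.2⟩
      have := hcirc 0 e.val hc
      rw [hdd]
      simpa using this
  | inr e =>
    have hb : bbW htg e₀ k = true := by unfold bbW; rw [hek]; rfl
    have hch := char1 htg he₀S he₀U hinj hper hk hek
    have hdd : ddW ψ htg e₀ k = (ψ e.val.2).1 - (ψ e.val.1).1 := by
      unfold ddW incW; rw [hek]; rfl
    unfold clsB
    rw [hb]
    simp only [if_true]
    constructor
    · intro hcls
      simp only [Bool.and_eq_true, decide_eq_true_eq, Bool.not_eq_true'] at hcls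
      have hc : e.val ∈ Ecirc E v₀ 1 := hch.mpr ⟨hcls.2, hcls.1⟩
      have := hcirc 1 e.val hc
      rw [hdd]
      simpa using this
    · intro hcls
      simp only [Bool.and_eq_false_iff, decide_eq_false_iff_not, Bool.not_eq_false'] at hcls
      have hnc : e.val ∉ Ecirc E v₀ 1 := by
        rw [hch]
        rintro ⟨h1, h2⟩
        rcases hcls with h | h
        · rw [h2] at h; exact absurd h (by simp)
        · exact absurd h1 (by simpa using h)
      rcases estar_or_ecirc htg e.2 with hst | hci
      · rw [hdd]; exact hstar 1 e.val hst
      · exact absurd hci hnc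

end Toom12
namespace Toom12
variable {V : Type} {E : Fin 2 → Set (V × V)} {v₀ : V} {n d : ℕ}

lemma clsB_false_iff {b : ℕ → Bool} {m k : ℕ} (h : b k = false) :
    clsB b m k = true ↔ (k = 0 ∨ b (k - 1) = false) := by
  simp [clsB, h]

lemma clsB_true_iff {b : ℕ → Bool} {m k : ℕ} (h : b k = true) :
    clsB b m k = true ↔ (b (k + 1) = false ∧ k + 1 ≠ m) := by
  simp [clsB, h, Bool.not_eq_true']

/-- Number of `true`s of `p` below `k`. -/
def cnt (p : ℕ → Bool) (k : ℕ) : ℕ := ((Finset.range k).filter (fun j => p j = true)).card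

lemma cnt_succ (p : ℕ → Bool) (k : ℕ) :
    cnt p (k + 1) = cnt p k + (if p k = true then 1 else 0) := by
  unfold cnt
  rw [Finset.range_add_one, Finset.filter_insert]
  by_cases h : p k = true
  · rw [if_pos h, if_pos h, Finset.card_insert_of_notMem (by simp)]
  · rw [if_neg h, if_neg h]; omega

lemma cnt_mono (p : ℕ → Bool) {k m : ℕ} (h : k ≤ m) : cnt p k ≤ cnt p m := by
  unfold cnt
  exact Finset.card_le_card
    (Finset.filter_subset_filter _ (Finset.range_subset_range.mpr h))

lemma cnt_lt {p : ℕ → Bool} {k m : ℕ} (hk : k < m) (hpk : p k = true) :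
    cnt p k < cnt p m := by
  have h1 : cnt p (k + 1) = cnt p k + 1 := by rw [cnt_succ, if_pos hpk]
  have h2 := cnt_mono p (show k + 1 ≤ m by omega)
  omega

lemma cnt_neg (p : ℕ → Bool) (m : ℕ) : cnt (fun j => !(p j)) m + cnt p m = m := by
  induction m with
  | zero => rfl
  | succ m ih =>
    rw [cnt_succ, cnt_succ]
    by_cases h : p m = true
    · rw [if_pos h, if_neg (by simp [h])]; omega
    · have hm : p m = false := by simpa using h
      rw [if_neg h, if_pos (by simp [hm])]; omega

/-- The shift bijection: `#A0`-classed steps equals `#` charge-0 steps. -/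
lemma count_clsB {b : ℕ → Bool} {m : ℕ} (hb0 : b 0 = false) :
    cnt (clsB b m) m = cnt (fun k => !(b k)) m := by
  unfold cnt
  apply Finset.card_bij (fun a _ => if b a = true then a + 1 else a)
  · intro a ha
    simp only [Finset.mem_filter, Finset.mem_range] at ha ⊢
    obtain ⟨ham, hacls⟩ := ha
    by_cases hba : b a = true
    · rw [if_pos hba]
      rw [clsB_true_iff hba] at hacls
      refine ⟨by omega, by simp [hacls.1]⟩
    · rw [if_neg hba]
      exact ⟨ham, by simp [Bool.not_eq_true] at hba ⊢; exact hba⟩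
  · intro a1 ha1 a2 ha2 heq
    simp only [Finset.mem_filter, Finset.mem_range] at ha1 ha2
    by_cases h1 : b a1 = true <;> by_cases h2 : b a2 = true
    · rw [if_pos h1, if_pos h2] at heq; omega
    · rw [if_pos h1, if_neg h2] at heq
      exfalso
      have hb2 : b a2 = false := by simpa using h2
      have hcls2 := ha2.2
      rw [clsB_false_iff hb2] at hcls2
      rcases hcls2 with h | h
      · omega
      · have he : a2 - 1 = a1 := by omega
        rw [he, h1] at h; exact absurd h (by simp)
    · rw [if_neg h1, if_pos h2] at heq
      exfalso
      have hcls1 := ha1.2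
      rw [clsB_false_iff (by simpa using h1)] at hcls1
      rcases hcls1 with h | h
      · omega
      · have : a1 - 1 = a2 := by omega
        rw [this, h2] at h; exact absurd h (by simp)
    · rw [if_neg h1, if_neg h2] at heq; omega
  · intro j hj
    simp only [Finset.mem_filter, Finset.mem_range, Bool.not_eq_true'] at hj
    obtain ⟨hjm, hbj⟩ := hj
    by_cases hc : j = 0 ∨ b (j - 1) = false
    · refine ⟨j, ?_, by rw [if_neg (by simp [hbj])]⟩
      simp only [Finset.mem_filter, Finset.mem_range]
      exact ⟨hjm, (clsB_false_iff hbj).mpr hc⟩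
    · push_neg at hc
      obtain ⟨hj0, hbj1⟩ := hc
      have hbj1' : b (j - 1) = true := by simpa using hbj1
      refine ⟨j - 1, ?_, ?_⟩
      · simp only [Finset.mem_filter, Finset.mem_range]
        refine ⟨by omega, (clsB_true_iff hbj1').mpr ⟨by rw [show j - 1 + 1 = j by omega]; exact hbj, by omega⟩⟩
      · rw [if_pos hbj1']; omega

/-- Left component of a sum as a subtype. -/
def leftEquiv (α β : Type*) : {g : α ⊕ β // g.isRight = false} ≃ α where
  toFun g := match g with
    | ⟨Sum.inl a, _⟩ => a
    | ⟨Sum.inr _, h⟩ => absurd h (by simp)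
  invFun a := ⟨Sum.inl a, rfl⟩
  left_inv g := match g with
    | ⟨Sum.inl a, _⟩ => rfl
    | ⟨Sum.inr _, h⟩ => absurd h (by simp)
  right_inv a := rfl

lemma count_D [Finite V] (htg : IsToomGraph E) {e₀ : Edg E}
    (hinj : ∀ i < 2 * n, ∀ j < 2 * n, (nxt htg)^[i] e₀ = (nxt htg)^[j] e₀ → i = j)
    (hcov : ∀ g : Edg E, ∃ k < 2 * n, (nxt htg)^[k] e₀ = g)
    (hcard : ∀ s, (E s).ncard = n) :
    cnt (fun k => !(bbW htg e₀ k)) (2 * n) = n := by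
  classical
  have h1 : ↑((Finset.range (2 * n)).filter (fun k => (!(bbW htg e₀ k)) = true)) =
      {k : ℕ | k < 2 * n ∧ bbW htg e₀ k = false} := by
    ext k
    simp [Bool.not_eq_true']
  have h2 := Set.ncard_coe_finset
    ((Finset.range (2 * n)).filter (fun k => (!(bbW htg e₀ k)) = true))
  rw [h1] at h2
  have hio : Set.InjOn (fun k => (nxt htg)^[k] e₀)
      {k : ℕ | k < 2 * n ∧ bbW htg e₀ k = false} :=
    fun i hi j hj hij => hinj i hi.1 j hj.1 hij
  have h3 := Set.ncard_image_of_injOn hio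
  have h4 : (fun k => (nxt htg)^[k] e₀) '' {k : ℕ | k < 2 * n ∧ bbW htg e₀ k = false} =
      {g : Edg E | g.isRight = false} := by
    ext g
    constructor
    · rintro ⟨k, ⟨hk, hb⟩, rfl⟩
      exact hb
    · intro hg
      obtain ⟨k, hk, hke⟩ := hcov g
      exact ⟨k, ⟨hk, by unfold bbW; rw [hke]; exact hg⟩, hke⟩
  have h5 : {g : Edg E | g.isRight = false}.ncard = n := by
    have e2 : ↥{g : Edg E | g.isRight = false} ≃ {e : V × V // e ∈ E 0} :=
      (Equiv.subtypeEquivRight (fun g => Iff.rfl)).trans (leftEquiv _ _)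
    rw [← Nat.card_coe_set_eq, Nat.card_congr e2]
    exact (Nat.card_coe_set_eq _).trans (hcard 0)
  unfold cnt
  rw [← h2, ← h3, h4, h5]

end Toom12
namespace Toom12

/-- The code type: `2n-1` charge bits plus `n` increments in each of `A 0`, `A 1`. -/
def CodeT (d n : ℕ) (A : Fin 2 → Finset (Fin d → ℤ)) : Type :=
  (Fin (2 * n - 1) → Bool) × (Fin n → ↥(A 0)) × (Fin n → ↥(A 1))

instance {d n : ℕ} {A : Fin 2 → Finset (Fin d → ℤ)} : Finite (CodeT d n A) := by
  unfold CodeT; infer_instance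

def decodeB (n : ℕ) (b' : Fin (2 * n - 1) → Bool) (k : ℕ) : Bool :=
  if h : 1 ≤ k ∧ k < 2 * n then b' ⟨k - 1, by omega⟩ else false

noncomputable def decodeD (d n : ℕ) (A : Fin 2 → Finset (Fin d → ℤ))
    (t : CodeT d n A) (k : ℕ) : Fin d → ℤ :=
  if clsB (decodeB n t.1) (2 * n) k = true then
    (if h : cnt (clsB (decodeB n t.1) (2 * n)) k < n then
      (t.2.1 ⟨cnt (clsB (decodeB n t.1) (2 * n)) k, h⟩ : Fin d → ℤ) else 0)
  else
    (if h : cnt (fun j => !(clsB (decodeB n t.1) (2 * n) j)) k < n then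
      (t.2.2 ⟨cnt (fun j => !(clsB (decodeB n t.1) (2 * n) j)) k, h⟩ : Fin d → ℤ) else 0)

noncomputable def decodeP (d n : ℕ) (A : Fin 2 → Finset (Fin d → ℤ))
    (t : CodeT d n A) : ℕ → Pt d
  | 0 => (fun _ => 0, 0)
  | k + 1 =>
    if decodeB n t.1 k = true then
      ((decodeP d n A t k).1 - decodeD d n A t k, (decodeP d n A t k).2 + 1)
    else
      ((decodeP d n A t k).1 + decodeD d n A t k, (decodeP d n A t k).2 - 1)

noncomputable def decodeData (d n : ℕ) (A : Fin 2 → Finset (Fin d → ℤ)) (t : CodeT d n A) :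
    Set (Pt d) × (Fin 2 → Set (Pt d × Pt d)) × (Fin 2 → Set (Pt d × Pt d)) :=
  ({q | ∃ k, k < 2 * n ∧ decodeB n t.1 k = false ∧ decodeB n t.1 (k + 1) = true ∧
      q = decodeP d n A t (k + 1)},
   fun s => if s = 0 then
       {pr | ∃ k, k < 2 * n ∧ decodeB n t.1 k = false ∧
         (k = 0 ∨ decodeB n t.1 (k - 1) = false) ∧
         pr = (decodeP d n A t k, decodeP d n A t (k + 1))}
     else
       {pr | ∃ k, k < 2 * n ∧ decodeB n t.1 k = true ∧
         ¬(k + 1 ≠ 2 * n ∧ decodeB n t.1 (k + 1) = false) ∧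
         pr = (decodeP d n A t (k + 1), decodeP d n A t k)},
   fun s => if s = 0 then
       {pr | ∃ k, k < 2 * n ∧ decodeB n t.1 k = false ∧
         ¬(k = 0 ∨ decodeB n t.1 (k - 1) = false) ∧
         pr = (decodeP d n A t k, decodeP d n A t (k + 1))}
     else
       {pr | ∃ k, k < 2 * n ∧ decodeB n t.1 k = true ∧
         (k + 1 ≠ 2 * n ∧ decodeB n t.1 (k + 1) = false) ∧
         pr = (decodeP d n A t (k + 1), decodeP d n A t k)})

lemma cnt_congr {p q : ℕ → Bool} (k : ℕ) (h : ∀ j < k, p j = q j) : cnt p k = cnt q k := by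
  unfold cnt
  congr 1
  apply Finset.filter_congr
  intro x hx
  rw [h x (Finset.mem_range.mp hx)]

lemma encode_exists {d n : ℕ} (A : Fin 2 → Finset (Fin d → ℤ)) (hn : 1 ≤ n)
    (a0 : ↥(A 0)) (a1 : ↥(A 1))
    {V : Type} [Finite V] {E : Fin 2 → Set (V × V)} {v₀ : V} {ψ : V → Pt d}
    (hctr : IsToomContour E v₀ ψ) (hroot : ψ v₀ = (fun _ => 0, 0))
    (hstar : ∀ s, ∀ e ∈ Estar E v₀ s, (ψ e.2).1 - (ψ e.1).1 ∈ A s)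
    (hcirc : ∀ s, ∀ e ∈ Ecirc E v₀ s, (ψ e.2).1 - (ψ e.1).1 ∈ A (s + 1))
    (hcard : ∀ s, (E s).ncard = n) :
    ∃ t : CodeT d n A,
      decodeData d n A t =
        (ψ '' sinks E,
         fun s => (fun e : V × V => (ψ e.1, ψ e.2)) '' Estar E v₀ s,
         fun s => (fun e : V × V => (ψ e.1, ψ e.2)) '' Ecirc E v₀ s) := by
  classical
  obtain ⟨htg, hconn, hsrc, hemb, hmax⟩ := hctr
  have hE0 : (E 0).Nonempty := by
    apply Set.nonempty_of_ncard_ne_zero; rw [hcard 0]; omega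
  obtain ⟨⟨x, y⟩, hxy⟩ := hE0
  obtain ⟨e₀, he₀L, he₀S, he₀U⟩ := root_spec htg hconn hsrc hxy
  obtain ⟨hper, hinj, hcov⟩ := walk_facts htg hconn hcard e₀
  have hb0 : bbW htg e₀ 0 = false := by
    unfold bbW
    simp only [Function.iterate_zero_apply]
    exact Sum.isRight_eq_false.mpr he₀L
  have hb2n : bbW htg e₀ (2 * n) = false := by
    unfold bbW
    rw [hper]
    exact Sum.isRight_eq_false.mpr he₀L
  -- the code
  obtain ⟨t, ht1, ht2, ht3⟩ : ∃ t : CodeT d n A,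
      t.1 = (fun i : Fin (2 * n - 1) => bbW htg e₀ (i.val + 1)) ∧
      t.2.1 = (fun i : Fin n =>
        if h : ∃ k, k < 2 * n ∧ clsB (bbW htg e₀) (2 * n) k = true ∧
            cnt (clsB (bbW htg e₀) (2 * n)) k = i.val
          then ⟨ddW ψ htg e₀ h.choose,
            (dd_mem htg he₀S he₀U hinj hper hstar hcirc h.choose_spec.1).1
              h.choose_spec.2.1⟩
          else a0) ∧
      t.2.2 = (fun i : Fin n =>
        if h : ∃ k, k < 2 * n ∧ clsB (bbW htg e₀) (2 * n) k = false ∧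
            cnt (fun j => !(clsB (bbW htg e₀) (2 * n) j)) k = i.val
          then ⟨ddW ψ htg e₀ h.choose,
            (dd_mem htg he₀S he₀U hinj hper hstar hcirc h.choose_spec.1).2
              h.choose_spec.2.1⟩
          else a1) :=
    ⟨⟨_, _, _⟩, rfl, rfl, rfl⟩
  refine ⟨t, ?_⟩
  -- agreement of decoded charges with the walk
  have hbag : ∀ k, k ≤ 2 * n → decodeB n t.1 k = bbW htg e₀ k := by
    intro k hk
    unfold decodeB
    split_ifs with h
    · rw [ht1]
      show bbW htg e₀ (k - 1 + 1) = bbW htg e₀ k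
      congr 1
      omega
    · have hk' : k = 0 ∨ k = 2 * n := by omega
      rcases hk' with rfl | rfl
      · exact hb0.symm
      · exact hb2n.symm
  have hclsag : ∀ k < 2 * n, clsB (decodeB n t.1) (2 * n) k = clsB (bbW htg e₀) (2 * n) k := by
    intro k hk
    unfold clsB
    rw [hbag k (by omega), hbag (k + 1) (by omega), hbag (k - 1) (by omega)]
  have hcntag : ∀ k ≤ 2 * n,
      cnt (clsB (decodeB n t.1) (2 * n)) k = cnt (clsB (bbW htg e₀) (2 * n)) k :=
    fun k hk => cnt_congr k (fun j hj => hclsag j (by omega))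
  have hcntagneg : ∀ k ≤ 2 * n,
      cnt (fun j => !(clsB (decodeB n t.1) (2 * n) j)) k =
      cnt (fun j => !(clsB (bbW htg e₀) (2 * n) j)) k :=
    fun k hk => cnt_congr k (fun j hj => by rw [hclsag j (by omega)])
  have hcnt0 : cnt (clsB (bbW htg e₀) (2 * n)) (2 * n) = n := by
    rw [count_clsB hb0]
    exact count_D htg hinj hcov hcard
  have hcnt1 : cnt (fun j => !(clsB (bbW htg e₀) (2 * n) j)) (2 * n) = n := by
    have := cnt_neg (clsB (bbW htg e₀) (2 * n)) (2 * n)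
    omega
  -- agreement of decoded increments
  have hF0 : ∀ i : Fin n, ∀ k', k' < 2 * n → clsB (bbW htg e₀) (2 * n) k' = true →
      cnt (clsB (bbW htg e₀) (2 * n)) k' = i.val →
      (t.2.1 i : Fin d → ℤ) = ddW ψ htg e₀ k' := by
    intro i k' hk' hc' hcnt'
    have hex : ∃ k, k < 2 * n ∧ clsB (bbW htg e₀) (2 * n) k = true ∧
        cnt (clsB (bbW htg e₀) (2 * n)) k = i.val := ⟨k', hk', hc', hcnt'⟩
    simp only [ht2]
    rw [dif_pos hex]
    obtain ⟨hk2, hc2, hcnt2⟩ := hex.choose_spec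
    have hchk : hex.choose = k' := by
      by_contra hne
      rcases Nat.lt_or_ge hex.choose k' with h | h
      · have := cnt_lt h hc2
        omega
      · have hlt2 : k' < hex.choose := by omega
        have := cnt_lt hlt2 hc'
        omega
    exact congrArg (ddW ψ htg e₀) hchk
  have hF1 : ∀ i : Fin n, ∀ k', k' < 2 * n → clsB (bbW htg e₀) (2 * n) k' = false →
      cnt (fun j => !(clsB (bbW htg e₀) (2 * n) j)) k' = i.val →
      (t.2.2 i : Fin d → ℤ) = ddW ψ htg e₀ k' := by
    intro i k' hk' hc' hcnt'
    have hex : ∃ k, k < 2 * n ∧ clsB (bbW htg e₀) (2 * n) k = false ∧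
        cnt (fun j => !(clsB (bbW htg e₀) (2 * n) j)) k = i.val := ⟨k', hk', hc', hcnt'⟩
    simp only [ht3]
    rw [dif_pos hex]
    obtain ⟨hk2, hc2, hcnt2⟩ := hex.choose_spec
    have hchk : hex.choose = k' := by
      by_contra hne
      rcases Nat.lt_or_ge hex.choose k' with h | h
      · have := cnt_lt (p := fun j => !(clsB (bbW htg e₀) (2 * n) j)) h (by simp [hc2])
        omega
      · have hlt2 : k' < hex.choose := by omega
        have := cnt_lt (p := fun j => !(clsB (bbW htg e₀) (2 * n) j)) hlt2 (by simp [hc'])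
        omega
    exact congrArg (ddW ψ htg e₀) hchk
  have hddag : ∀ k < 2 * n, decodeD d n A t k = ddW ψ htg e₀ k := by
    intro k hk
    unfold decodeD
    rw [hclsag k hk, hcntag k (by omega), hcntagneg k (by omega)]
    by_cases hc : clsB (bbW htg e₀) (2 * n) k = true
    · rw [if_pos hc]
      have hlt : cnt (clsB (bbW htg e₀) (2 * n)) k < n := by
        have := cnt_lt hk hc
        omega
      rw [dif_pos hlt]
      exact hF0 ⟨cnt (clsB (bbW htg e₀) (2 * n)) k, hlt⟩ k hk hc rfl
    · rw [if_neg hc]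
      have hcf : clsB (bbW htg e₀) (2 * n) k = false := by simpa using hc
      have hlt : cnt (fun j => !(clsB (bbW htg e₀) (2 * n) j)) k < n := by
        have := cnt_lt (p := fun j => !(clsB (bbW htg e₀) (2 * n) j)) hk (by simp [hcf])
        omega
      rw [dif_pos hlt]
      exact hF1 ⟨cnt (fun j => !(clsB (bbW htg e₀) (2 * n) j)) k, hlt⟩ k hk hcf rfl
  -- agreement of decoded positions
  have hpag : ∀ k, k ≤ 2 * n → decodeP d n A t k = ψ (tS ((nxt htg)^[k] e₀)) := by
    intro k
    induction k with
    | zero =>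
      intro _
      simp only [Function.iterate_zero_apply, decodeP]
      rw [he₀S, hroot]
    | succ k ih =>
      intro hk
      have ihk := ih (by omega)
      rw [pw_step htg e₀ hemb.1 k]
      simp only [decodeP]
      rw [hbag k (by omega), hddag k (by omega), ihk]
  -- now the three components
  unfold decodeData
  simp only [Prod.mk.injEq]
  refine ⟨?_, ?_, ?_⟩
  · -- sinks
    ext q
    simp only [Set.mem_setOf_eq]
    constructor
    · rintro ⟨k, hk, hbf, hbt, rfl⟩
      rw [hbag k (by omega)] at hbf
      rw [hbag (k + 1) (by omega)] at hbt
      refine ⟨tE ((nxt htg)^[k] e₀), sink_of_step htg hconn hxy hbf hbt, ?_⟩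
      rw [hpag (k + 1) (by omega), tS_seq_succ]
    · rintro ⟨u, hu, rfl⟩
      obtain ⟨k, hk, hbf, hbt, hte⟩ := sink_exists_step htg hconn hxy hcov hu
      refine ⟨k, hk, by rw [hbag k (by omega)]; exact hbf,
        by rw [hbag (k + 1) (by omega)]; exact hbt, ?_⟩
      rw [hpag (k + 1) (by omega), tS_seq_succ, hte]
  · -- E⃗∗
    funext s
    have hs : s = 0 ∨ s = 1 := by omega
    rcases hs with rfl | rfl
    · simp only [reduceIte]
      ext pr
      simp only [Set.mem_setOf_eq, Set.mem_image]
      constructor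
      · rintro ⟨k, hk, hbf, hcond, rfl⟩
        rw [hbag k (by omega)] at hbf
        rw [hbag (k - 1) (by omega)] at hcond
        cases hek : (nxt htg)^[k] e₀ with
        | inr e => unfold bbW at hbf; rw [hek] at hbf; simp at hbf
        | inl e =>
          have hes : e.val ∈ Estar E v₀ 0 := by
            rcases estar_or_ecirc htg e.2 with h | h
            · exact h
            · exfalso
              obtain ⟨hk1, hbt⟩ := (char0 htg he₀S he₀U hinj hk hek).mp h
              rcases hcond with h' | h'
              · omega
              · rw [h'] at hbt; exact absurd hbt (by simp)
          refine ⟨e.val, hes, ?_⟩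
          rw [hpag k (by omega), hpag (k + 1) (by omega), tS_seq_succ, hek]
          rfl
      · rintro ⟨e, hes, rfl⟩
        obtain ⟨k, hk, hke⟩ := hcov (Sum.inl ⟨e, hes.1⟩)
        have hbf : bbW htg e₀ k = false := by unfold bbW; rw [hke]; rfl
        have hnc : ¬(1 ≤ k ∧ bbW htg e₀ (k - 1) = true) := by
          intro hcc
          exact not_estar_ecirc hes ((char0 htg he₀S he₀U hinj hk hke).mpr hcc)
        refine ⟨k, hk, by rw [hbag k (by omega)]; exact hbf, ?_, ?_⟩
        · rw [hbag (k - 1) (by omega)]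
          by_cases h0 : k = 0
          · exact Or.inl h0
          · right
            rcases Bool.eq_false_or_eq_true (bbW htg e₀ (k - 1)) with h | h
            · exact absurd ⟨by omega, h⟩ hnc
            · exact h
        · rw [hpag k (by omega), hpag (k + 1) (by omega), tS_seq_succ, hke]
          rfl
    · simp only [if_neg (show ¬(1 : Fin 2) = 0 by decide)]
      ext pr
      simp only [Set.mem_setOf_eq, Set.mem_image]
      constructor
      · rintro ⟨k, hk, hbt, hcond, rfl⟩
        rw [hbag k (by omega)] at hbt
        rw [hbag (k + 1) (by omega)] at hcond
        cases hek : (nxt htg)^[k] e₀ with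
        | inl e => unfold bbW at hbt; rw [hek] at hbt; simp at hbt
        | inr e =>
          have hes : e.val ∈ Estar E v₀ 1 := by
            rcases estar_or_ecirc htg e.2 with h | h
            · exact h
            · exact absurd ((char1 htg he₀S he₀U hinj hper hk hek).mp h) hcond
          refine ⟨e.val, hes, ?_⟩
          rw [hpag k (by omega), hpag (k + 1) (by omega), tS_seq_succ, hek]
          rfl
      · rintro ⟨e, hes, rfl⟩
        obtain ⟨k, hk, hke⟩ := hcov (Sum.inr ⟨e, hes.1⟩)
        have hbt : bbW htg e₀ k = true := by unfold bbW; rw [hke]; rfl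
        have hnc : ¬(k + 1 ≠ 2 * n ∧ bbW htg e₀ (k + 1) = false) := by
          intro hcc
          exact not_estar_ecirc hes ((char1 htg he₀S he₀U hinj hper hk hke).mpr hcc)
        refine ⟨k, hk, by rw [hbag k (by omega)]; exact hbt, ?_, ?_⟩
        · rw [hbag (k + 1) (by omega)]
          exact hnc
        · rw [hpag k (by omega), hpag (k + 1) (by omega), tS_seq_succ, hke]
          rfl
  · -- E⃗∘
    funext s
    have hs : s = 0 ∨ s = 1 := by omega
    rcases hs with rfl | rfl
    · simp only [reduceIte]
      ext pr
      simp only [Set.mem_setOf_eq, Set.mem_image]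
      constructor
      · rintro ⟨k, hk, hbf, hcond, rfl⟩
        rw [hbag k (by omega)] at hbf
        rw [hbag (k - 1) (by omega)] at hcond
        cases hek : (nxt htg)^[k] e₀ with
        | inr e => unfold bbW at hbf; rw [hek] at hbf; simp at hbf
        | inl e =>
          have hcc : 1 ≤ k ∧ bbW htg e₀ (k - 1) = true := by
            rcases Nat.eq_zero_or_pos k with rfl | hpos
            · exact absurd (Or.inl rfl) hcond
            · rcases Bool.eq_false_or_eq_true (bbW htg e₀ (k - 1)) with h | h
              · exact ⟨hpos, h⟩
              · exact absurd (Or.inr h) hcond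
          have hes : e.val ∈ Ecirc E v₀ 0 := (char0 htg he₀S he₀U hinj hk hek).mpr hcc
          refine ⟨e.val, hes, ?_⟩
          rw [hpag k (by omega), hpag (k + 1) (by omega), tS_seq_succ, hek]
          rfl
      · rintro ⟨e, hes, rfl⟩
        obtain ⟨k, hk, hke⟩ := hcov (Sum.inl ⟨e, hes.1⟩)
        have hbf : bbW htg e₀ k = false := by unfold bbW; rw [hke]; rfl
        obtain ⟨hk1, hbt⟩ := (char0 htg he₀S he₀U hinj hk hke).mp hes
        refine ⟨k, hk, by rw [hbag k (by omega)]; exact hbf, ?_, ?_⟩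
        · rw [hbag (k - 1) (by omega)]
          rintro (h | h)
          · omega
          · rw [h] at hbt; exact absurd hbt (by simp)
        · rw [hpag k (by omega), hpag (k + 1) (by omega), tS_seq_succ, hke]
          rfl
    · simp only [if_neg (show ¬(1 : Fin 2) = 0 by decide)]
      ext pr
      simp only [Set.mem_setOf_eq, Set.mem_image]
      constructor
      · rintro ⟨k, hk, hbt, hcond, rfl⟩
        rw [hbag k (by omega)] at hbt
        rw [hbag (k + 1) (by omega)] at hcond
        cases hek : (nxt htg)^[k] e₀ with
        | inl e => unfold bbW at hbt; rw [hek] at hbt; simp at hbt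
        | inr e =>
          have hes : e.val ∈ Ecirc E v₀ 1 :=
            (char1 htg he₀S he₀U hinj hper hk hek).mpr hcond
          refine ⟨e.val, hes, ?_⟩
          rw [hpag k (by omega), hpag (k + 1) (by omega), tS_seq_succ, hek]
          rfl
      · rintro ⟨e, hes, rfl⟩
        obtain ⟨k, hk, hke⟩ := hcov (Sum.inr ⟨e, hes.1⟩)
        have hbt : bbW htg e₀ k = true := by unfold bbW; rw [hke]; rfl
        have hcc := (char1 htg he₀S he₀U hinj hper hk hke).mp hes
        refine ⟨k, hk, by rw [hbag k (by omega)]; exact hbt, ?_, ?_⟩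
        · rw [hbag (k + 1) (by omega)]
          exact hcc
        · rw [hpag k (by omega), hpag (k + 1) (by omega), tS_seq_succ, hke]
          rfl

end Toom12
lemma minUp_nonempty {d : ℕ} {φ : Conf d → Bool} (hmono : IsMonotoneMap φ)
    (hnc : ∃ x y : Conf d, φ x ≠ φ y) {A : Finset (Fin d → ℤ)} (hA : A ∈ minUp φ) :
    A.Nonempty := by
  rcases Finset.eq_empty_or_nonempty A with rfl | h
  · exfalso
    obtain ⟨x, y, hxy⟩ := hnc
    have hall : ∀ z : Conf d, φ z = true := by
      intro z
      have hle := hmono (ind ∅) z (fun i => by simp [ind])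
      rw [hA.1] at hle
      rcases Bool.eq_false_or_eq_true (φ z) with hz | hz
      · exact hz
      · rw [hz] at hle; exact absurd hle (by decide)
    exact hxy (by rw [hall x, hall y])
  · exact h

/-- Exponential bound for Toom contours with two charges:
`N''_n ≤ (1/2)(4 M₁ M₂)^n` where `M_s = |A_s(φ)|`. -/
theorem stmt12 {d : ℕ} (φ : Conf d → Bool)
    (hloc : IsLocal φ) (hmono : IsMonotoneMap φ) (hnc : ∃ x y : Conf d, φ x ≠ φ y)
    (A : Fin 2 → Finset (Fin d → ℤ)) (hA : ∀ s, A s ∈ minUp φ)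
    (M₁ M₂ : ℕ) (hM₁ : M₁ = (A 0).card) (hM₂ : M₂ = (A 1).card)
    (n : ℕ) (hn : 1 ≤ n) :
    ((Ncount'' d n A : ℝ)) ≤ (1 / 2 : ℝ) * (4 * (M₁ : ℝ) * (M₂ : ℝ)) ^ n := by
  obtain ⟨a0v, ha0⟩ := minUp_nonempty hmono hnc (hA 0)
  obtain ⟨a1v, ha1⟩ := minUp_nonempty hmono hnc (hA 1)
  have hsub : { data : Set (Pt d) × (Fin 2 → Set (Pt d × Pt d)) × (Fin 2 → Set (Pt d × Pt d)) |
      ∃ (V : Type) (_ : Finite V) (E : Fin 2 → Set (V × V)) (v₀ : V) (ψ : V → Pt d),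
        IsToomContour E v₀ ψ ∧ ψ v₀ = (fun _ => 0, 0) ∧
        (∀ s, ∀ e ∈ Estar E v₀ s, (ψ e.2).1 - (ψ e.1).1 ∈ A s) ∧
        (∀ s, ∀ e ∈ Ecirc E v₀ s, (ψ e.2).1 - (ψ e.1).1 ∈ A (s + 1)) ∧
        (∀ v ∈ sources E, v ≠ v₀ → ∀ w₁ w₂ : V,
          (v, w₁) ∈ E 0 → (v, w₂) ∈ E 1 → (ψ w₁).1 ≠ (ψ w₂).1) ∧
        (∀ s, (E s).ncard = n) ∧
        data.1 = ψ '' sinks E ∧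
        data.2.1 = (fun s => (fun e : V × V => (ψ e.1, ψ e.2)) '' Estar E v₀ s) ∧
        data.2.2 = (fun s => (fun e : V × V => (ψ e.1, ψ e.2)) '' Ecirc E v₀ s) } ⊆
      Set.range (Toom12.decodeData d n A) := by
    rintro data ⟨V, hfin, E, v₀, ψ, hctr, hroot, hstar, hcirc, hdist, hcard, h1, h2, h3⟩
    haveI := hfin
    obtain ⟨t, ht⟩ := Toom12.encode_exists A hn ⟨a0v, ha0⟩ ⟨a1v, ha1⟩ hctr hroot hstar hcirc hcard
    refine ⟨t, ?_⟩
    rw [ht]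
    exact Prod.ext h1.symm (Prod.ext h2.symm h3.symm)
  have hnat : Ncount'' d n A ≤ 2 ^ (2 * n - 1) * (A 0).card ^ n * (A 1).card ^ n := by
    have hcardT : Nat.card (Toom12.CodeT d n A) =
        2 ^ (2 * n - 1) * (A 0).card ^ n * (A 1).card ^ n := by
      unfold Toom12.CodeT
      rw [Nat.card_prod, Nat.card_prod, Nat.card_fun, Nat.card_fun, Nat.card_fun]
      rw [Nat.card_eq_fintype_card (α := Bool), Fintype.card_bool]
      rw [Nat.card_eq_fintype_card (α := Fin (2 * n - 1)), Fintype.card_fin]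
      rw [Nat.card_eq_fintype_card (α := Fin n), Fintype.card_fin]
      rw [Nat.card_eq_finsetCard (A 0), Nat.card_eq_finsetCard (A 1)]
      ring
    have h0 : Ncount'' d n A ≤ Nat.card (Toom12.CodeT d n A) := by
      unfold Ncount''
      refine le_trans (Set.ncard_le_ncard hsub (Set.finite_range _)) ?_
      rw [← Set.ncard_univ, ← Set.image_univ]
      exact Set.ncard_image_le Set.finite_univ
    omega
  have hR : (Ncount'' d n A : ℝ) ≤
      ((2 ^ (2 * n - 1) * (A 0).card ^ n * (A 1).card ^ n : ℕ) : ℝ) :=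
    Nat.cast_le.mpr hnat
  refine hR.trans (le_of_eq ?_)
  subst hM₁
  subst hM₂
  push_cast
  have h4 : ((4 : ℝ) * ((A 0).card : ℝ) * ((A 1).card : ℝ)) ^ n =
      2 * ((2 : ℝ) ^ (2 * n - 1) * ((A 0).card : ℝ) ^ n * ((A 1).card : ℝ) ^ n) := by
    obtain ⟨m, hm⟩ : ∃ m, m = 2 * n - 1 := ⟨_, rfl⟩
    rw [← hm]
    rw [mul_pow, mul_pow, show (4 : ℝ) = 2 ^ 2 by norm_num, ← pow_mul,
      show 2 * n = m + 1 by omega, pow_succ]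
    ring
  rw [h4, ← mul_assoc]
  norm_num
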